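/- Let f : ℝ³ → ℂ be continuously differentiable and compactly supported, and let v_f(t,x) := (1/4π) ∫_{S²} [ f(x+tω) + t ω·∇f(x+tω) ] dσ(ω) be the free cosine wave propagator applied to f. Then for every x ∈ ℝ³, ∫_0^∞ |v_f(t,x)| dt ≤ (1/2π) ∫_{ℝ³} |∇f(y)|/|x−y| dy. Consequently sup_{x ∈ ℝ³} ∫_0^∞ |v_f(t,x)| dt ≤ (1/2π) ‖∇f‖_K, the reversed space-time estimate ‖cos(t√(−Δ)) f‖_{L^∞_x L¹_t} ≲ ‖∇f‖_K. -/

import Mathlib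

set_option autoImplicit false

open MeasureTheory ENNReal Real

noncomputable section

/-- `ℝ³` as a Euclidean space. -/
abbrev R3 : Type := EuclideanSpace ℝ (Fin 3)

/-- The surface measure on the unit sphere `S² ⊂ ℝ³`. -/
def sphereMeasure : Measure (Metric.sphere (0 : R3) 1) :=
  (volume : Measure R3).toSphere

/-- The free cosine wave propagator (Kirchhoff formula):
`v_f(t,x) = (1/4π) ∫_{S²} [f(x+tω) + t ω·∇f(x+tω)] dσ(ω)`. -/
def cosProp (f : R3 → ℂ) (t : ℝ) (x : R3) : ℂ :=
  (1 / (4 * π)) • ∫ ω : Metric.sphere (0 : R3) 1,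
    (f (x + t • (ω : R3)) + t • (fderiv ℝ f (x + t • (ω : R3))) (ω : R3)) ∂sphereMeasure

/-- The (global) Kato norm of a function `V` on `ℝ³`:
`‖V‖_K = sup_y ∫ |V(x)| / |x - y| dx`. -/
def katoNorm {E : Type*} [NormedAddCommGroup E] (V : R3 → E) : ℝ≥0∞ :=
  ⨆ y : R3, ∫⁻ x : R3, (‖V x‖₊ : ℝ≥0∞) / (‖x - y‖₊ : ℝ≥0∞)

set_option maxHeartbeats 1000000

instance : IsFiniteMeasure sphereMeasure := by unfold sphereMeasure; infer_instance

lemma polar (F : R3 → ℝ≥0∞) (hF : Measurable F) :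
    ∫⁻ y, F y = ∫⁻ ω : Metric.sphere (0:R3) 1,
      (∫⁻ s in Set.Ioi (0:ℝ), ENNReal.ofReal (s^2) * F (s • (ω:R3))) ∂sphereMeasure := by
  have h := (volume : Measure R3).measurePreserving_homeomorphUnitSphereProd
  have hdim : Module.finrank ℝ R3 = 3 := finrank_euclideanSpace_fin
  rw [hdim] at h
  set H : Metric.sphere (0:R3) 1 × Set.Ioi (0:ℝ) → ℝ≥0∞ := fun p => F (p.2.1 • p.1.1) with hH
  have hHm : Measurable H :=
    hF.comp ((measurable_subtype_coe.comp measurable_snd).smul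
      (measurable_subtype_coe.comp measurable_fst))
  have key := h.lintegral_comp hHm
  have h1 : (fun x : ({0}ᶜ : Set R3) => H (homeomorphUnitSphereProd R3 x)) = fun x => F x.1 := by
    funext x
    simp only [hH, homeomorphUnitSphereProd_apply_snd_coe, homeomorphUnitSphereProd_apply_fst_coe]
    rw [smul_inv_smul₀ (norm_ne_zero_iff.2 x.2)]
  rw [h1] at key
  rw [lintegral_subtype_comap (measurableSet_singleton (0:R3)).compl F,
    restrict_compl_singleton] at key
  rw [key, lintegral_prod _ hHm.aemeasurable]
  refine lintegral_congr fun ω => ?_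
  show (∫⁻ r, H (ω, r) ∂Measure.volumeIoiPow 2) = _
  have hg : Measurable (fun r : Set.Ioi (0:ℝ) => H (ω, r)) := hHm.comp measurable_prodMk_left
  rw [Measure.volumeIoiPow, lintegral_withDensity_eq_lintegral_mul _
    (by exact measurable_subtype_coe.pow_const 2 |>.ennreal_ofReal) hg]
  simp only [Pi.mul_apply]
  rw [lintegral_subtype_comap measurableSet_Ioi
    (fun s : ℝ => ENNReal.ofReal (s^2) * F (s • (ω:R3)))]

lemma ftc (f : R3 → ℂ) (hf : ContDiff ℝ 1 f) (hsupp : HasCompactSupport f)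
    (x : R3) (ω : R3) (hω : ‖ω‖ = 1) (t : ℝ) (ht : 0 ≤ t) :
    (‖f (x + t • ω)‖₊ : ℝ≥0∞) ≤ ∫⁻ s in Set.Ioi t, (‖fderiv ℝ f (x + s • ω)‖₊ : ℝ≥0∞) := by
  obtain ⟨M, hM⟩ := hsupp.isBounded.subset_closedBall 0
  set R : ℝ := ‖x‖ + |M| + 1 + t with hR
  have htR : t ≤ R := by
    have : (0:ℝ) ≤ ‖x‖ + |M| + 1 := by positivity
    linarith
  have hR0 : 0 ≤ R := le_trans ht htR
  have hfR : f (x + R • ω) = 0 := by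
    apply image_eq_zero_of_notMem_tsupport
    intro hmem
    have h2 := hM hmem
    rw [Metric.mem_closedBall, dist_zero_right] at h2
    have h3 : R - ‖x‖ ≤ ‖x + R • ω‖ := by
      have h4 := norm_sub_le (x + R • ω) x
      rw [add_sub_cancel_left] at h4
      rw [norm_smul, hω, norm_eq_abs, abs_of_nonneg hR0, mul_one] at h4
      linarith
    have : |M| + 1 + t ≤ M := by linarith
    have := le_abs_self M
    linarith
  set g : ℝ → ℂ := fun s => f (x + s • ω) with hg
  set g' : ℝ → ℂ := fun s => fderiv ℝ f (x + s • ω) ω with hg'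
  have hderiv : ∀ s : ℝ, HasDerivAt g (g' s) s := by
    intro s
    have h1 : HasFDerivAt f (fderiv ℝ f (x + s • ω)) (x + s • ω) :=
      (hf.differentiable one_ne_zero (x + s • ω)).hasFDerivAt
    have h2 : HasDerivAt (fun s : ℝ => x + s • ω) ω s := by
      simpa using ((hasDerivAt_id s).smul_const ω).const_add x
    exact h1.comp_hasDerivAt s h2
  have hcont' : Continuous g' := by
    have hc : Continuous (fun s : ℝ => x + s • ω) := by continuity
    exact ((hf.continuous_fderiv one_ne_zero).comp hc).clm_apply continuous_const
  have heq : ∫ s in t..R, g' s = g R - g t :=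
    intervalIntegral.integral_eq_sub_of_hasDerivAt (fun s _ => hderiv s)
      (hcont'.intervalIntegrable t R)
  have hgt : (‖g t‖₊ : ℝ≥0∞) = ‖∫ s in Set.Ioc t R, g' s‖₊ := by
    rw [← intervalIntegral.integral_of_le htR, heq]
    simp [hg, hfR]
  calc (‖f (x + t • ω)‖₊ : ℝ≥0∞) = ‖∫ s in Set.Ioc t R, g' s‖₊ := hgt
    _ ≤ ∫⁻ s in Set.Ioc t R, (‖g' s‖₊ : ℝ≥0∞) := by exact enorm_integral_le_lintegral_enorm _
    _ ≤ ∫⁻ s in Set.Ioi t, (‖fderiv ℝ f (x + s • ω)‖₊ : ℝ≥0∞) := by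
        refine lintegral_mono' (Measure.restrict_mono Set.Ioc_subset_Ioi_self le_rfl) ?_
        intro s
        simp only [hg']
        have h4 : ‖(fderiv ℝ f (x + s • ω)) ω‖ ≤ ‖fderiv ℝ f (x + s • ω)‖ := by
          simpa [hω] using (fderiv ℝ f (x + s • ω)).le_opNorm ω
        have h5 : ‖(fderiv ℝ f (x + s • ω)) ω‖₊ ≤ ‖fderiv ℝ f (x + s • ω)‖₊ := by
          rwa [← coe_nnnorm, ← coe_nnnorm, NNReal.coe_le_coe] at h4
        exact ENNReal.coe_le_coe.2 h5

lemma swap_layer (h : ℝ → ℝ≥0∞) (hm : Measurable h) :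
    (∫⁻ t in Set.Ioi (0:ℝ), ∫⁻ s in Set.Ioi t, h s) =
      ∫⁻ s in Set.Ioi (0:ℝ), ENNReal.ofReal s * h s := by
  have hFm : Measurable (fun p : ℝ × ℝ => if p.1 < p.2 then h p.2 else 0) :=
    Measurable.ite (measurableSet_lt measurable_fst measurable_snd)
      (hm.comp measurable_snd) measurable_const
  calc (∫⁻ t in Set.Ioi (0:ℝ), ∫⁻ s in Set.Ioi t, h s)
      = ∫⁻ t in Set.Ioi (0:ℝ), ∫⁻ s in Set.Ioi (0:ℝ), (if t < s then h s else 0) := by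
        refine setLIntegral_congr_fun_ae measurableSet_Ioi (ae_of_all _ fun t ht => ?_)
        have h1 : (fun s => if t < s then h s else 0) = (Set.Ioi t).indicator h := by
          funext s; simp [Set.indicator_apply]
        rw [h1, lintegral_indicator measurableSet_Ioi, Measure.restrict_restrict measurableSet_Ioi,
          Set.inter_eq_self_of_subset_left (Set.Ioi_subset_Ioi ht.out.le)]
    _ = ∫⁻ s in Set.Ioi (0:ℝ), ∫⁻ t in Set.Ioi (0:ℝ), (if t < s then h s else 0) :=
        lintegral_lintegral_swap hFm.aemeasurable
    _ = ∫⁻ s in Set.Ioi (0:ℝ), ENNReal.ofReal s * h s := by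
        refine setLIntegral_congr_fun_ae measurableSet_Ioi (ae_of_all _ fun s hs => ?_)
        have h1 : (fun t => if t < s then h s else 0) =
            (Set.Iio s).indicator (fun _ => h s) := by
          funext t; simp [Set.indicator_apply]
        rw [h1, lintegral_indicator_const measurableSet_Iio,
          Measure.restrict_apply measurableSet_Iio, Set.Iio_inter_Ioi, Real.volume_Ioo,
          sub_zero, mul_comm]

-- polar coordinates for the Riesz-type integral
lemma polar_riesz (g : R3 → (R3 →L[ℝ] ℂ)) (hg : Continuous g) (x : R3) :
    (∫⁻ y, (‖g y‖₊ : ℝ≥0∞) / (‖y - x‖₊ : ℝ≥0∞)) =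
      ∫⁻ ω : Metric.sphere (0:R3) 1,
        (∫⁻ s in Set.Ioi (0:ℝ), ENNReal.ofReal s * (‖g (x + s • (ω:R3))‖₊ : ℝ≥0∞))
        ∂sphereMeasure := by
  have hFm : Measurable fun y : R3 => (‖g (x + y)‖₊ : ℝ≥0∞) / (‖y‖₊ : ℝ≥0∞) :=
    (Measurable.enorm (hg.measurable.comp (measurable_const_add x))).div
      measurable_nnnorm.coe_nnreal_ennreal
  have htrans : (∫⁻ y, (‖g (x + y)‖₊ : ℝ≥0∞) / (‖y‖₊ : ℝ≥0∞)) =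
      ∫⁻ y, (‖g y‖₊ : ℝ≥0∞) / (‖y - x‖₊ : ℝ≥0∞) := by
    have := lintegral_add_left_eq_self (μ := (volume : Measure R3))
      (fun y : R3 => (‖g y‖₊ : ℝ≥0∞) / (‖y - x‖₊ : ℝ≥0∞)) x
    rw [← this]
    refine lintegral_congr fun y => ?_
    simp [add_sub_cancel_left]
  rw [← htrans, polar _ hFm]
  refine lintegral_congr fun ω => ?_
  have hω : ‖(ω:R3)‖ = 1 := by
    have := ω.2; rwa [mem_sphere_zero_iff_norm] at this
  refine setLIntegral_congr_fun_ae measurableSet_Ioi (ae_of_all _ fun s hs => ?_)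
  have hs0 : (0:ℝ) < s := hs.out
  have hnorm : (‖s • (ω:R3)‖₊ : ℝ≥0∞) = ENNReal.ofReal s := by
    rw [← enorm_eq_nnnorm, ← ofReal_norm, norm_smul, hω, Real.norm_eq_abs,
      abs_of_pos hs0, mul_one]
  rw [hnorm, sq, ENNReal.ofReal_mul (le_of_lt hs0), mul_assoc,
    ENNReal.mul_div_cancel' (by simp [hs0]) (fun h => absurd h ENNReal.ofReal_ne_top), mul_comm]

-- finiteness of the Riesz integral
lemma riesz_fin (g : R3 → (R3 →L[ℝ] ℂ)) (hg : Continuous g) (hgs : HasCompactSupport g)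
    (x : R3) : (∫⁻ y, (‖g y‖₊ : ℝ≥0∞) / (‖y - x‖₊ : ℝ≥0∞)) ≠ ⊤ := by
  rw [polar_riesz g hg x]
  obtain ⟨C, hC⟩ := hgs.exists_bound_of_continuous hg
  obtain ⟨M, hM⟩ := hgs.isBounded.subset_closedBall 0
  set R : ℝ := ‖x‖ + |M| + 1 with hR
  have hR0 : 0 < R := by positivity
  have hbound : ∀ ω : Metric.sphere (0:R3) 1,
      (∫⁻ s in Set.Ioi (0:ℝ), ENNReal.ofReal s * (‖g (x + s • (ω:R3))‖₊ : ℝ≥0∞)) ≤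
        ENNReal.ofReal R * ENNReal.ofReal C * ENNReal.ofReal R := by
    intro ω
    have hω : ‖(ω:R3)‖ = 1 := by
      have := ω.2; rwa [mem_sphere_zero_iff_norm] at this
    have hpt : ∀ s ∈ Set.Ioi (0:ℝ),
        ENNReal.ofReal s * (‖g (x + s • (ω:R3))‖₊ : ℝ≥0∞) ≤
          (Set.Ioc (0:ℝ) R).indicator (fun _ => ENNReal.ofReal R * ENNReal.ofReal C) s := by
      intro s hs
      by_cases hsR : s ≤ R
      · rw [Set.indicator_of_mem (Set.mem_Ioc.2 ⟨hs.out, hsR⟩)]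
        refine mul_le_mul' (ENNReal.ofReal_le_ofReal hsR) ?_
        rw [← enorm_eq_nnnorm, ← ofReal_norm]
        exact ENNReal.ofReal_le_ofReal (hC _)
      · rw [Set.indicator_of_notMem (fun hmem => hsR hmem.2)]
        push_neg at hsR
        have hz : g (x + s • (ω:R3)) = 0 := by
          apply image_eq_zero_of_notMem_tsupport
          intro hmem
          have h2 := hM hmem
          rw [Metric.mem_closedBall, dist_zero_right] at h2
          have h4 := norm_sub_le (x + s • (ω:R3)) x
          rw [add_sub_cancel_left, norm_smul, hω, Real.norm_eq_abs,
            abs_of_pos (lt_trans hR0 hsR), mul_one] at h4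
          have h5 := le_abs_self M
          have : s ≤ M + ‖x‖ := by linarith
          rw [hR] at hsR
          linarith
        simp [hz]
    calc (∫⁻ s in Set.Ioi (0:ℝ), ENNReal.ofReal s * (‖g (x + s • (ω:R3))‖₊ : ℝ≥0∞))
        ≤ ∫⁻ s in Set.Ioi (0:ℝ),
            (Set.Ioc (0:ℝ) R).indicator (fun _ => ENNReal.ofReal R * ENNReal.ofReal C) s :=
          setLIntegral_mono' measurableSet_Ioi hpt
      _ ≤ ENNReal.ofReal R * ENNReal.ofReal C * ENNReal.ofReal R := by
          rw [lintegral_indicator measurableSet_Ioc, setLIntegral_const]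
          refine mul_le_mul' le_rfl ?_
          rw [Measure.restrict_apply measurableSet_Ioc]
          calc volume (Set.Ioc 0 R ∩ Set.Ioi 0) ≤ volume (Set.Ioc 0 R) :=
              measure_mono Set.inter_subset_left
            _ = ENNReal.ofReal R := by rw [Real.volume_Ioc, sub_zero]
  refine ne_of_lt (lt_of_le_of_lt (lintegral_mono hbound) ?_)
  rw [lintegral_const]
  exact ENNReal.mul_lt_top
    (ENNReal.mul_lt_top (ENNReal.mul_lt_top ENNReal.ofReal_lt_top ENNReal.ofReal_lt_top)
      ENNReal.ofReal_lt_top) (measure_lt_top _ _)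

lemma riesz_ae (g : R3 → (R3 →L[ℝ] ℂ)) (x : R3) :
    (fun y : R3 => ENNReal.ofReal (‖g y‖ / ‖x - y‖)) =ᵐ[(volume : Measure R3)]
      (fun y => (‖g y‖₊ : ℝ≥0∞) / (‖y - x‖₊ : ℝ≥0∞)) := by
  have hmem : {x}ᶜ ∈ ae (volume : Measure R3) := compl_mem_ae_iff.2 (measure_singleton x)
  refine Filter.eventually_of_mem hmem fun y hy => ?_
  have hne : y ≠ x := hy
  have hpos : 0 < ‖x - y‖ := by
    rw [norm_pos_iff, sub_ne_zero]
    exact fun h => hne h.symm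
  simp only []
  rw [ENNReal.ofReal_div_of_pos hpos, ofReal_norm, ofReal_norm, enorm_eq_nnnorm, enorm_eq_nnnorm,
    show (‖x - y‖₊ : ℝ≥0∞) = ‖y - x‖₊ by rw [← neg_sub y x, nnnorm_neg]]

lemma riesz_integrable (g : R3 → (R3 →L[ℝ] ℂ)) (hg : Continuous g)
    (hgs : HasCompactSupport g) (x : R3) :
    Integrable (fun y : R3 => ‖g y‖ / ‖x - y‖) := by
  have hmeas : Measurable (fun y : R3 => ‖g y‖ / ‖x - y‖) :=
    (hg.norm.measurable).div ((continuous_const.sub continuous_id).norm.measurable)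
  refine ⟨hmeas.aestronglyMeasurable, ?_⟩
  rw [hasFiniteIntegral_iff_ofReal (ae_of_all _ fun y => by positivity)]
  calc (∫⁻ y, ENNReal.ofReal (‖g y‖ / ‖x - y‖))
      = ∫⁻ y, (‖g y‖₊ : ℝ≥0∞) / (‖y - x‖₊ : ℝ≥0∞) := lintegral_congr_ae (riesz_ae g x)
    _ < ⊤ := lt_top_iff_ne_top.2 (riesz_fin g hg hgs x)

lemma riesz_eq (g : R3 → (R3 →L[ℝ] ℂ)) (hg : Continuous g) (hgs : HasCompactSupport g)
    (x : R3) : ENNReal.ofReal (∫ y, ‖g y‖ / ‖x - y‖) =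
      ∫⁻ y, (‖g y‖₊ : ℝ≥0∞) / (‖y - x‖₊ : ℝ≥0∞) := by
  rw [ofReal_integral_eq_lintegral_ofReal (riesz_integrable g hg hgs x)
    (ae_of_all _ fun y => by positivity)]
  exact lintegral_congr_ae (riesz_ae g x)

-- main pointwise bound, in ℝ≥0∞ form
lemma main_bound (f : R3 → ℂ) (hf : ContDiff ℝ 1 f) (hsupp : HasCompactSupport f) (x : R3) :
    ∫⁻ t in Set.Ioi (0:ℝ), (‖cosProp f t x‖₊ : ℝ≥0∞) ≤
      ENNReal.ofReal (1/(2*π)) * ∫⁻ y, (‖fderiv ℝ f y‖₊ : ℝ≥0∞) / (‖y - x‖₊ : ℝ≥0∞) := by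
  have hπ : (0:ℝ) < π := Real.pi_pos
  have hfc : Continuous f := hf.continuous
  have hdc : Continuous (fderiv ℝ f) := hf.continuous_fderiv one_ne_zero
  have hcurve : Measurable (fun p : ℝ × Metric.sphere (0:R3) 1 => x + p.1 • (p.2 : R3)) :=
    (measurable_fst.smul (measurable_subtype_coe.comp measurable_snd)).const_add x
  -- the sphere integrand bound
  set A : ℝ → Metric.sphere (0:R3) 1 → ℝ≥0∞ :=
    fun t ω => (‖f (x + t • (ω:R3))‖₊ : ℝ≥0∞) with hA
  set B : ℝ → Metric.sphere (0:R3) 1 → ℝ≥0∞ :=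
    fun t ω => ENNReal.ofReal t * (‖fderiv ℝ f (x + t • (ω:R3))‖₊ : ℝ≥0∞) with hB
  have hAm : Measurable (fun p : ℝ × Metric.sphere (0:R3) 1 => A p.1 p.2) :=
    (Measurable.enorm (hfc.measurable.comp hcurve))
  have hBm : Measurable (fun p : ℝ × Metric.sphere (0:R3) 1 => B p.1 p.2) :=
    (measurable_fst.ennreal_ofReal.mul (Measurable.enorm (hdc.measurable.comp hcurve)))
  -- Step A : pointwise bound for fixed t > 0
  have stepA : ∀ t ∈ Set.Ioi (0:ℝ), (‖cosProp f t x‖₊ : ℝ≥0∞) ≤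
      ENNReal.ofReal (1/(4*π)) * ∫⁻ ω, (A t ω + B t ω) ∂sphereMeasure := by
    intro t ht
    rw [cosProp, nnnorm_smul, ENNReal.coe_mul, ← enorm_eq_nnnorm (1/(4*π) : ℝ),
      Real.enorm_eq_ofReal (by positivity : (0:ℝ) ≤ 1/(4*π))]
    refine mul_le_mul_right ?_ _
    refine le_trans (enorm_integral_le_lintegral_enorm _) (lintegral_mono fun ω => ?_)
    refine le_trans (ENNReal.coe_le_coe.2 (nnnorm_add_le _ _)) ?_
    rw [ENNReal.coe_add]
    refine add_le_add le_rfl ?_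
    rw [hB]
    rw [nnnorm_smul, ENNReal.coe_mul, ← enorm_eq_nnnorm t, Real.enorm_eq_ofReal (le_of_lt ht.out)]
    refine mul_le_mul_right ?_ _
    have hω : ‖(ω:R3)‖ = 1 := by
      have := ω.2; rwa [mem_sphere_zero_iff_norm] at this
    have h4 : ‖(fderiv ℝ f (x + t • (ω:R3))) (ω:R3)‖ ≤ ‖fderiv ℝ f (x + t • (ω:R3))‖ := by
      simpa [hω] using (fderiv ℝ f (x + t • (ω:R3))).le_opNorm (ω:R3)
    have h5 : ‖(fderiv ℝ f (x + t • (ω:R3))) (ω:R3)‖₊ ≤ ‖fderiv ℝ f (x + t • (ω:R3))‖₊ := by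
      rwa [← coe_nnnorm, ← coe_nnnorm, NNReal.coe_le_coe] at h4
    exact ENNReal.coe_le_coe.2 h5
  -- J ω
  set J : Metric.sphere (0:R3) 1 → ℝ≥0∞ :=
    fun ω => ∫⁻ s in Set.Ioi (0:ℝ), ENNReal.ofReal s * (‖fderiv ℝ f (x + s • (ω:R3))‖₊ : ℝ≥0∞)
    with hJ
  -- Step B : integrate in t
  have stepB : ∫⁻ t in Set.Ioi (0:ℝ), (‖cosProp f t x‖₊ : ℝ≥0∞) ≤
      ENNReal.ofReal (1/(4*π)) * ∫⁻ ω, (J ω + J ω) ∂sphereMeasure := by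
    refine le_trans (setLIntegral_mono' measurableSet_Ioi stepA) ?_
    rw [lintegral_const_mul' _ _ ENNReal.ofReal_ne_top]
    refine mul_le_mul_right ?_ _
    rw [lintegral_lintegral_swap (hAm.add hBm).aemeasurable]
    refine lintegral_mono_ae (ae_of_all _ fun ω => ?_)
    have hω : ‖(ω:R3)‖ = 1 := by
      have := ω.2; rwa [mem_sphere_zero_iff_norm] at this
    have hAom : Measurable fun t => A t ω := by
      simp only [hA]
      exact Measurable.enorm (hfc.measurable.comp ((measurable_id.smul_const ((ω:R3))).const_add x))
    rw [lintegral_add_left hAom]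
    refine add_le_add ?_ le_rfl
    -- term A
    have hDm : Measurable fun s : ℝ => (‖fderiv ℝ f (x + s • (ω:R3))‖₊ : ℝ≥0∞) := by
      exact Measurable.enorm (hdc.measurable.comp
        (((measurable_id.smul_const ((ω:R3)))).const_add x))
    calc ∫⁻ t in Set.Ioi (0:ℝ), A t ω
        ≤ ∫⁻ t in Set.Ioi (0:ℝ), ∫⁻ s in Set.Ioi t,
            (‖fderiv ℝ f (x + s • (ω:R3))‖₊ : ℝ≥0∞) := by
          refine setLIntegral_mono' measurableSet_Ioi fun t ht => ?_
          exact ftc f hf hsupp x (ω:R3) hω t (le_of_lt ht.out)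
      _ = J ω := swap_layer _ hDm
  -- Step C : polar coordinates
  have stepC : (∫⁻ ω, J ω ∂sphereMeasure) =
      ∫⁻ y, (‖fderiv ℝ f y‖₊ : ℝ≥0∞) / (‖y - x‖₊ : ℝ≥0∞) := (polar_riesz (fderiv ℝ f) hdc x).symm
  -- put it together
  calc ∫⁻ t in Set.Ioi (0:ℝ), (‖cosProp f t x‖₊ : ℝ≥0∞)
      ≤ ENNReal.ofReal (1/(4*π)) * ∫⁻ ω, (J ω + J ω) ∂sphereMeasure := stepB
    _ = ENNReal.ofReal (1/(2*π)) * ∫⁻ ω, J ω ∂sphereMeasure := by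
        have h2 : (∫⁻ ω, (J ω + J ω) ∂sphereMeasure) = 2 * ∫⁻ ω, J ω ∂sphereMeasure := by
          rw [← lintegral_const_mul' _ _ (by norm_num : (2:ℝ≥0∞) ≠ ⊤)]
          exact lintegral_congr fun ω => (two_mul _).symm
        rw [h2, ← mul_assoc]
        congr 1
        rw [(by norm_num : (2:ℝ≥0∞) = ENNReal.ofReal 2), ← ENNReal.ofReal_mul (by positivity)]
        rw [div_mul_eq_mul_div, mul_comm]
        congr 1
        ring
    _ = ENNReal.ofReal (1/(2*π)) * ∫⁻ y, (‖fderiv ℝ f y‖₊ : ℝ≥0∞) / (‖y - x‖₊ : ℝ≥0∞) := by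
        rw [stepC]

theorem cosine_reversed_Linfty_L1_kato (f : R3 → ℂ) (hf : ContDiff ℝ 1 f)
    (hsupp : HasCompactSupport f) :
    (∀ x : R3,
      ∫⁻ t in Set.Ioi (0 : ℝ), (‖cosProp f t x‖₊ : ℝ≥0∞) ≤
        ENNReal.ofReal ((1 / (2 * π)) * ∫ y : R3, ‖fderiv ℝ f y‖ / ‖x - y‖)) ∧
    (⨆ x : R3, ∫⁻ t in Set.Ioi (0 : ℝ), (‖cosProp f t x‖₊ : ℝ≥0∞)) ≤
      (ENNReal.ofReal (2 * π))⁻¹ * katoNorm (fun y => fderiv ℝ f y) := by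
  have hdc : Continuous (fderiv ℝ f) := hf.continuous_fderiv one_ne_zero
  have hds : HasCompactSupport (fderiv ℝ f) := hsupp.fderiv (𝕜 := ℝ)
  have key := main_bound f hf hsupp
  constructor
  · intro x
    rw [ENNReal.ofReal_mul (by positivity : (0:ℝ) ≤ 1/(2*π)), riesz_eq _ hdc hds x]
    exact key x
  · refine iSup_le fun x => ?_
    refine le_trans (key x) ?_
    rw [one_div, ENNReal.ofReal_inv_of_pos (by positivity : (0:ℝ) < 2*π)]
    refine mul_le_mul' le_rfl ?_
    exact le_iSup (fun y : R3 => ∫⁻ z : R3, (‖fderiv ℝ f z‖₊ : ℝ≥0∞) / (‖z - y‖₊ : ℝ≥0∞)) x
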